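/- Let L be a Leibniz A-algebra. Then the lower nilpotent series of L coincides with the derived series of L, i.e. N_i(L) = L^(i) for all i ≥ 0. -/

import Mathlib

/-- A (right) Leibniz algebra structure on an `F`-vector space `L`:
a bilinear bracket satisfying `[x,[y,z]] = [[x,y],z] - [[x,z],y]`. -/
structure LeibnizAlg (F : Type*) (L : Type*) [Field F] [AddCommGroup L] [Module F L] where
  bracket : L →ₗ[F] L →ₗ[F] L
  leibniz : ∀ x y z : L,
    bracket x (bracket y z) = bracket (bracket x y) z - bracket (bracket x z) y

namespace LeibnizAlg

variable {F : Type*} {L : Type*} [Field F] [AddCommGroup L] [Module F L]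

/-- The product `[M, N]` of two subspaces: the span of all brackets `[m, n]`. -/
def prod (A : LeibnizAlg F L) (M N : Submodule F L) : Submodule F L :=
  Submodule.span F {z : L | ∃ m ∈ M, ∃ n ∈ N, z = A.bracket m n}

/-- A subalgebra: a subspace closed under the product. -/
def IsSubalgebra (A : LeibnizAlg F L) (S : Submodule F L) : Prop :=
  A.prod S S ≤ S

/-- A (two-sided) ideal: `[I, L] ⊆ I` and `[L, I] ⊆ I`. -/
def IsIdeal (A : LeibnizAlg F L) (I : Submodule F L) : Prop :=
  A.prod I ⊤ ≤ I ∧ A.prod ⊤ I ≤ I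

/-- Lower central series of a subspace `U`: `lcs U 0 = U = U¹`,
`lcs U k = U^(k+1)`, i.e. `lcs U (k+1) = [lcs U k, U]`. -/
def lcs (A : LeibnizAlg F L) (U : Submodule F L) : ℕ → Submodule F L
  | 0 => U
  | k + 1 => A.prod (lcs A U k) U

/-- `U` is nilpotent: `U^(n+1) = 0` for some `n`. -/
def IsNilpotentSub (A : LeibnizAlg F L) (U : Submodule F L) : Prop :=
  ∃ n : ℕ, A.lcs U n = ⊥

/-- `U` is abelian: `[U, U] = 0`. -/
def IsAbelian (A : LeibnizAlg F L) (U : Submodule F L) : Prop :=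
  A.prod U U = ⊥

/-- An `A`-algebra: every nilpotent subalgebra is abelian. -/
def IsAAlgebra (A : LeibnizAlg F L) : Prop :=
  ∀ U : Submodule F L, A.IsSubalgebra U → A.IsNilpotentSub U → A.IsAbelian U

/-- Derived series: `derSeries 0 = L`, `derSeries (k+1) = [derSeries k, derSeries k]`. -/
def derSeries (A : LeibnizAlg F L) : ℕ → Submodule F L
  | 0 => ⊤
  | k + 1 => A.prod (derSeries A k) (derSeries A k)

/-- `L` is solvable: some term of the derived series vanishes. -/
def IsSolvable (A : LeibnizAlg F L) : Prop :=
  ∃ n : ℕ, A.derSeries n = ⊥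

/-- The centralizer `Z_L(U)` of a subspace `U`. -/
def centralizer (A : LeibnizAlg F L) (U : Submodule F L) : Submodule F L where
  carrier := {x : L | ∀ u ∈ U, A.bracket x u = 0 ∧ A.bracket u x = 0}
  add_mem' := by
    intro a b ha hb u hu
    refine ⟨?_, ?_⟩
    · rw [map_add, LinearMap.add_apply, (ha u hu).1, (hb u hu).1, add_zero]
    · rw [map_add, (ha u hu).2, (hb u hu).2, add_zero]
  zero_mem' := by
    intro u hu
    refine ⟨?_, ?_⟩
    · rw [map_zero, LinearMap.zero_apply]
    · rw [map_zero]
  smul_mem' := by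
    intro c a ha u hu
    refine ⟨?_, ?_⟩
    · rw [map_smul, LinearMap.smul_apply, (ha u hu).1, smul_zero]
    · rw [map_smul, (ha u hu).2, smul_zero]

/-- The centre of the subalgebra `M`: elements of `M` centralizing `M`. -/
def centerOf (A : LeibnizAlg F L) (M : Submodule F L) : Submodule F L :=
  M ⊓ A.centralizer M

/-- `N` is the nilradical: the largest nilpotent ideal. -/
def IsNilradical (A : LeibnizAlg F L) (N : Submodule F L) : Prop :=
  A.IsIdeal N ∧ A.IsNilpotentSub N ∧
    ∀ I : Submodule F L, A.IsIdeal I → A.IsNilpotentSub I → I ≤ N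

/-- A minimal ideal: a nonzero ideal containing no ideal other than `0` and itself. -/
def IsMinimalIdeal (A : LeibnizAlg F L) (I : Submodule F L) : Prop :=
  A.IsIdeal I ∧ I ≠ ⊥ ∧ ∀ J : Submodule F L, A.IsIdeal J → J ≤ I → J = ⊥ ∨ J = I

/-- A maximal subalgebra. -/
def IsMaximalSubalgebra (A : LeibnizAlg F L) (M : Submodule F L) : Prop :=
  A.IsSubalgebra M ∧ M ≠ ⊤ ∧
    ∀ S : Submodule F L, A.IsSubalgebra S → M ≤ S → S = M ∨ S = ⊤

/-- `L` is φ-free: every ideal contained in all maximal subalgebras is zero. -/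
def IsPhiFree (A : LeibnizAlg F L) : Prop :=
  ∀ I : Submodule F L, A.IsIdeal I →
    (∀ M : Submodule F L, A.IsMaximalSubalgebra M → I ≤ M) → I = ⊥

/-- `Asoc L`: the sum of the abelian minimal ideals. -/
def asoc (A : LeibnizAlg F L) : Submodule F L :=
  sSup {I : Submodule F L | A.IsMinimalIdeal I ∧ A.IsAbelian I}

/-- A Cartan subalgebra: a nilpotent, self-normalizing subalgebra. -/
def IsCartan (A : LeibnizAlg F L) (C : Submodule F L) : Prop :=
  A.IsSubalgebra C ∧ A.IsNilpotentSub C ∧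
    ∀ x : L, (∀ c ∈ C, A.bracket x c ∈ C ∧ A.bracket c x ∈ C) → x ∈ C

/-- A maximal nilpotent subalgebra. -/
def IsMaxNilpotentSubalgebra (A : LeibnizAlg F L) (U : Submodule F L) : Prop :=
  A.IsSubalgebra U ∧ A.IsNilpotentSub U ∧
    ∀ V : Submodule F L, A.IsSubalgebra V → A.IsNilpotentSub V → U ≤ V → V = U

end LeibnizAlg

namespace LeibnizAlg

variable {F : Type*} {L : Type*} [Field F] [AddCommGroup L] [Module F L]

/-- The nilpotent residual `γ_∞(U)`: the intersection of the terms of the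
lower central series of `U`. -/
def nilpotentResidual (A : LeibnizAlg F L) (U : Submodule F L) : Submodule F L :=
  ⨅ k : ℕ, A.lcs U k

/-- The lower nilpotent series: `N_0(L) = L`, `N_{i+1}(L) = γ_∞(N_i(L))`. -/
def lowerNilpotentSeries (A : LeibnizAlg F L) : ℕ → Submodule F L
  | 0 => ⊤
  | i + 1 => A.nilpotentResidual (lowerNilpotentSeries A i)

end LeibnizAlg

namespace LeibnizAlg

variable {F : Type*} {L : Type*} [Field F] [AddCommGroup L] [Module F L]

lemma bracket_mem_prod (A : LeibnizAlg F L) {M N : Submodule F L} {m n : L}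
    (hm : m ∈ M) (hn : n ∈ N) : A.bracket m n ∈ A.prod M N :=
  Submodule.subset_span ⟨m, hm, n, hn, rfl⟩

lemma prod_le_iff (A : LeibnizAlg F L) {M N P : Submodule F L} :
    A.prod M N ≤ P ↔ ∀ m ∈ M, ∀ n ∈ N, A.bracket m n ∈ P := by
  constructor
  · intro h m hm n hn
    exact h (A.bracket_mem_prod hm hn)
  · intro h
    apply Submodule.span_le.2
    rintro z ⟨m, hm, n, hn, rfl⟩
    exact h m hm n hn

lemma prod_mono (A : LeibnizAlg F L) {M M' N N' : Submodule F L}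
    (h1 : M ≤ M') (h2 : N ≤ N') : A.prod M N ≤ A.prod M' N' :=
  A.prod_le_iff.2 fun m hm n hn => A.bracket_mem_prod (h1 hm) (h2 hn)

lemma lcs_mono (A : LeibnizAlg F L) {U V : Submodule F L} (h : U ≤ V) :
    ∀ k, A.lcs U k ≤ A.lcs V k
  | 0 => h
  | k + 1 => A.prod_mono (A.lcs_mono h k) h

lemma lcs_succ_le (A : LeibnizAlg F L) {U : Submodule F L} (hU : A.IsSubalgebra U) :
    ∀ k, A.lcs U (k + 1) ≤ A.lcs U k
  | 0 => hU
  | k + 1 => A.prod_mono (A.lcs_succ_le hU k) le_rfl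

lemma lcs_le_self (A : LeibnizAlg F L) {U : Submodule F L} (hU : A.IsSubalgebra U) :
    ∀ k, A.lcs U k ≤ U
  | 0 => le_rfl
  | k + 1 => (A.lcs_succ_le hU k).trans (A.lcs_le_self hU k)

lemma lcs_le_of_le (A : LeibnizAlg F L) {U : Submodule F L} (hU : A.IsSubalgebra U)
    {k m : ℕ} (h : k ≤ m) : A.lcs U m ≤ A.lcs U k := by
  induction m, h using Nat.le_induction with
  | base => exact le_rfl
  | succ m hm ih => exact (A.lcs_succ_le hU m).trans ih

/-- `[U^{j+1}, U^{k+1}] ≤ U^{j+k+2}` (in `lcs` indexing). -/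
lemma prod_lcs_lcs (A : LeibnizAlg F L) {U : Submodule F L} :
    ∀ k j, A.prod (A.lcs U j) (A.lcs U k) ≤ A.lcs U (j + k + 1) := by
  intro k
  induction k with
  | zero => intro j; exact le_rfl
  | succ k ih =>
    intro j
    rw [A.prod_le_iff]
    intro a ha z hz
    have : A.lcs U (k + 1) ≤ Submodule.comap (A.bracket a) (A.lcs U (j + (k + 1) + 1)) := by
      apply Submodule.span_le.2
      rintro w ⟨b, hb, u, hu, rfl⟩
      simp only [SetLike.mem_coe, Submodule.mem_comap]
      rw [A.leibniz a b u]
      apply sub_mem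
      · have h1 : A.bracket a b ∈ A.lcs U (j + k + 1) := ih j (A.bracket_mem_prod ha hb)
        have h2 : A.bracket (A.bracket a b) u ∈ A.lcs U (j + k + 1 + 1) :=
          A.bracket_mem_prod h1 hu
        have : j + k + 1 + 1 = j + (k + 1) + 1 := by omega
        rwa [this] at h2
      · have h1 : A.bracket a u ∈ A.lcs U (j + 1) := A.bracket_mem_prod ha hu
        have h2 : A.bracket (A.bracket a u) b ∈ A.lcs U (j + 1 + k + 1) :=
          ih (j + 1) (A.bracket_mem_prod h1 hb)
        have : j + 1 + k + 1 = j + (k + 1) + 1 := by omega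
        rwa [this] at h2
    exact this hz

lemma nilpotentResidual_le_lcs (A : LeibnizAlg F L) (U : Submodule F L) (k : ℕ) :
    A.nilpotentResidual U ≤ A.lcs U k :=
  iInf_le _ k

lemma nilpotentResidual_le_self (A : LeibnizAlg F L) (U : Submodule F L) :
    A.nilpotentResidual U ≤ U :=
  A.nilpotentResidual_le_lcs U 0

lemma nilpotentResidual_mono (A : LeibnizAlg F L) {U V : Submodule F L} (h : U ≤ V) :
    A.nilpotentResidual U ≤ A.nilpotentResidual V :=
  le_iInf fun k => (A.nilpotentResidual_le_lcs U k).trans (A.lcs_mono h k)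

lemma prod_left_residual_le (A : LeibnizAlg F L) {U : Submodule F L} (hU : A.IsSubalgebra U) :
    A.prod (A.nilpotentResidual U) U ≤ A.nilpotentResidual U := by
  apply le_iInf
  intro m
  match m with
  | 0 =>
    exact (A.prod_mono (A.nilpotentResidual_le_self U) le_rfl).trans hU
  | k + 1 =>
    calc A.prod (A.nilpotentResidual U) U ≤ A.prod (A.lcs U k) U :=
          A.prod_mono (A.nilpotentResidual_le_lcs U k) le_rfl
    _ = A.lcs U (k + 1) := rfl

lemma prod_right_residual_le (A : LeibnizAlg F L) {U : Submodule F L} (hU : A.IsSubalgebra U) :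
    A.prod U (A.nilpotentResidual U) ≤ A.nilpotentResidual U := by
  apply le_iInf
  intro m
  match m with
  | 0 =>
    exact (A.prod_mono le_rfl (A.nilpotentResidual_le_self U)).trans hU
  | k + 1 =>
    calc A.prod U (A.nilpotentResidual U) ≤ A.prod (A.lcs U 0) (A.lcs U k) :=
          A.prod_mono le_rfl (A.nilpotentResidual_le_lcs U k)
    _ ≤ A.lcs U (0 + k + 1) := A.prod_lcs_lcs k 0
    _ = A.lcs U (k + 1) := by rw [Nat.zero_add]

/-- The lower central series of a subalgebra stabilizes at the nilpotent residual. -/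
lemma exists_lcs_stab [FiniteDimensional F L] (A : LeibnizAlg F L) {U : Submodule F L}
    (hU : A.IsSubalgebra U) :
    ∃ n, ∀ m, n ≤ m → A.lcs U m = A.nilpotentResidual U := by
  have hex : ∃ n, A.lcs U (n + 1) = A.lcs U n := by
    by_contra hc
    push_neg at hc
    have hlt : ∀ n, A.lcs U (n + 1) < A.lcs U n :=
      fun n => lt_of_le_of_ne (A.lcs_succ_le hU n) (hc n)
    have hrank : ∀ n, Module.finrank F (A.lcs U n) + n ≤ Module.finrank F (A.lcs U 0) := by
      intro n
      induction n with
      | zero => simp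
      | succ n ih =>
        have := Submodule.finrank_lt_finrank_of_lt (hlt n)
        omega
    have := hrank (Module.finrank F (A.lcs U 0) + 1)
    omega
  obtain ⟨n, hn⟩ := hex
  have hstab : ∀ m, n ≤ m → A.lcs U m = A.lcs U n := by
    intro m hm
    induction m, hm using Nat.le_induction with
    | base => rfl
    | succ m hm ih =>
      show A.prod (A.lcs U m) U = A.lcs U n
      rw [ih]
      exact hn
  have hres : A.nilpotentResidual U = A.lcs U n := by
    apply le_antisymm (A.nilpotentResidual_le_lcs U n)
    apply le_iInf
    intro k
    rcases le_total k n with h | h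
    · exact A.lcs_le_of_le hU h
    · exact le_of_eq (hstab k h).symm
  exact ⟨n, fun m hm => by rw [hstab m hm, ← hres]⟩


section Engel

variable [FiniteDimensional F L]

attribute [local instance 100] LieRing.ofAssociativeRing

/-- Right multiplication by `x ∈ W`, as an endomorphism of `W`. -/
def rmul (A : LeibnizAlg F L) {W : Submodule F L} (hW : A.IsSubalgebra W) (x : ↥W) :
    Module.End F ↥W :=
  (A.bracket.flip (x : L)).restrict (fun a ha => hW (A.bracket_mem_prod ha x.2))

@[simp] lemma rmul_apply_coe (A : LeibnizAlg F L) {W : Submodule F L} (hW : A.IsSubalgebra W)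
    (x a : ↥W) : (A.rmul hW x a : L) = A.bracket (a : L) (x : L) := rfl

/-- `rmul` as a linear map. -/
def emap (A : LeibnizAlg F L) {W : Submodule F L} (hW : A.IsSubalgebra W) :
    ↥W →ₗ[F] Module.End F ↥W where
  toFun := A.rmul hW
  map_add' x y := by
    ext a
    show ((A.rmul hW (x + y) a : L)) = ((A.rmul hW x a + A.rmul hW y a : ↥W) : L)
    simp [map_add]
  map_smul' c x := by
    ext a
    show ((A.rmul hW (c • x) a : L)) = ((c • A.rmul hW x a : ↥W) : L)
    simp [map_smul]

lemma rmul_pow_coe (A : LeibnizAlg F L) {W : Submodule F L} (hW : A.IsSubalgebra W)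
    (x : ↥W) : ∀ (m : ℕ) (a : ↥W), ((((A.rmul hW x) ^ m) a : ↥W) : L) =
      (((A.bracket.flip (x : L)) ^ m)) (a : L) := by
  intro m
  induction m with
  | zero => intro a; rfl
  | succ m ih =>
    intro a
    rw [pow_succ', pow_succ', Module.End.mul_apply, Module.End.mul_apply, rmul_apply_coe, ih a]
    rfl

/-- Engel's theorem for a subalgebra of a Leibniz algebra: if all right
multiplications are nilpotent, the subalgebra is nilpotent. -/
lemma isNilpotentSub_of_forall_rmul (A : LeibnizAlg F L) {W : Submodule F L}
    (hW : A.IsSubalgebra W) (h : ∀ x : ↥W, IsNilpotent (A.rmul hW x)) :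
    A.IsNilpotentSub W := by
  classical
  -- the image of `emap` is a Lie subalgebra of `End F W`
  let S : LieSubalgebra F (Module.End F ↥W) :=
    { LinearMap.range (A.emap hW) with
      lie_mem' := by
        rintro f g ⟨x, rfl⟩ ⟨y, rfl⟩
        refine ⟨⟨A.bracket (y : L) (x : L), hW (A.bracket_mem_prod y.2 x.2)⟩, ?_⟩
        ext a
        rw [Ring.lie_def, LinearMap.sub_apply, Module.End.mul_apply, Module.End.mul_apply]
        show (A.bracket (a : L) (A.bracket (y : L) (x : L))) =
          ((A.rmul hW x (A.rmul hW y a) - A.rmul hW y (A.rmul hW x a) : ↥W) : L)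
        rw [AddSubgroupClass.coe_sub, rmul_apply_coe, rmul_apply_coe, rmul_apply_coe,
          rmul_apply_coe, A.leibniz] }
  have hnoeth : IsNoetherian F ↥S := by
    show IsNoetherian F ↥(LinearMap.range (A.emap hW))
    infer_instance
  have hx : ∀ x : ↥S, IsNilpotent (LieModule.toEnd F ↥S ↥W x) := by
    rintro ⟨f, y, rfl⟩
    have he : LieModule.toEnd F (↥S) ↥W ⟨A.emap hW y, ⟨y, rfl⟩⟩ = A.emap hW y := by
      ext a
      rfl
    rw [he]
    exact h y
  have hnil : LieModule.IsNilpotent ↥S ↥W :=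
    LieAlgebra.isEngelian_of_isNoetherian ↥W hx
  obtain ⟨k, hk⟩ := (LieModule.isNilpotent_iff F ↥S ↥W).mp hnil
  refine ⟨k, le_bot_iff.1 ?_⟩
  have key : ∀ j, A.lcs W j ≤
      Submodule.map W.subtype (LieModule.lowerCentralSeries F ↥S ↥W j : Submodule F ↥W) := by
    intro j
    induction j with
    | zero =>
      rw [show (LieModule.lowerCentralSeries F ↥S ↥W 0) = ⊤ from rfl]
      rw [LieSubmodule.top_toSubmodule, Submodule.map_subtype_top]
      exact le_rfl
    | succ j ih =>
      show A.prod (A.lcs W j) W ≤ _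
      rw [A.prod_le_iff]
      intro m hm u hu
      obtain ⟨m', hm', rfl⟩ := ih hm
      have hmem : (⁅(⟨A.emap hW ⟨u, hu⟩, ⟨⟨u, hu⟩, rfl⟩⟩ : ↥S), m'⁆ : ↥W) ∈
          LieModule.lowerCentralSeries F ↥S ↥W (j + 1) := by
        rw [LieModule.lowerCentralSeries_succ]
        exact LieSubmodule.lie_mem_lie (LieSubmodule.mem_top _) hm'
      refine ⟨_, hmem, ?_⟩
      rfl
  have := (key k).trans (le_of_eq (by rw [hk, LieSubmodule.bot_toSubmodule, Submodule.map_bot]))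
  exact this

end Engel


section Fitting

lemma flip_deriv (A : LeibnizAlg F L) (x u v : L) :
    A.bracket.flip x (A.bracket u v) =
      A.bracket (A.bracket.flip x u) v + A.bracket u (A.bracket.flip x v) := by
  show A.bracket (A.bracket u v) x =
    A.bracket (A.bracket u x) v + A.bracket u (A.bracket v x)
  have h := A.leibniz u v x
  have : A.bracket u (A.bracket v x) = A.bracket (A.bracket u v) x - A.bracket (A.bracket u x) v := h
  rw [this]
  abel

lemma pow_bracket_mem_span (A : LeibnizAlg F L) (x a b : L) :
    ∀ m : ℕ, ((A.bracket.flip x) ^ m) (A.bracket a b) ∈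
      Submodule.span F {z : L | ∃ i j, i + j = m ∧
        z = A.bracket (((A.bracket.flip x) ^ i) a) (((A.bracket.flip x) ^ j) b)} := by
  intro m
  induction m with
  | zero => exact Submodule.subset_span ⟨0, 0, rfl, rfl⟩
  | succ m ih =>
    rw [pow_succ', Module.End.mul_apply]
    have hmap : Submodule.span F {z : L | ∃ i j, i + j = m ∧
        z = A.bracket (((A.bracket.flip x) ^ i) a) (((A.bracket.flip x) ^ j) b)} ≤
        Submodule.comap (A.bracket.flip x) (Submodule.span F {z : L | ∃ i j, i + j = m + 1 ∧
        z = A.bracket (((A.bracket.flip x) ^ i) a) (((A.bracket.flip x) ^ j) b)}) := by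
      apply Submodule.span_le.2
      rintro z ⟨i, j, hij, rfl⟩
      simp only [SetLike.mem_coe, Submodule.mem_comap]
      rw [A.flip_deriv]
      apply add_mem
      · apply Submodule.subset_span
        refine ⟨i + 1, j, by omega, ?_⟩
        rw [pow_succ', Module.End.mul_apply]
      · apply Submodule.subset_span
        refine ⟨i, j + 1, by omega, ?_⟩
        rw [pow_succ', Module.End.mul_apply]
    exact hmap ih

lemma pow_flip_mem_lcs (A : LeibnizAlg F L) {W : Submodule F L} {x : L} (hx : x ∈ W) :
    ∀ m, ∀ w ∈ W, ((A.bracket.flip x) ^ m) w ∈ A.lcs W m := by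
  intro m
  induction m with
  | zero => intro w hw; exact hw
  | succ m ih =>
    intro w hw
    rw [pow_succ', Module.End.mul_apply]
    exact A.bracket_mem_prod (ih w hw) hx

variable [FiniteDimensional F L]

lemma exists_proper_supplement (A : LeibnizAlg F L) {W : Submodule F L}
    (hW : A.IsSubalgebra W) {x : ↥W} (hx : ¬ IsNilpotent (A.rmul hW x)) :
    ∃ V : Submodule F L, V < W ∧ A.IsSubalgebra V ∧ W ≤ V ⊔ A.nilpotentResidual W := by
  obtain ⟨n, hn⟩ := A.exists_lcs_stab hW
  set f := A.rmul hW x with hf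
  set D := Module.finrank F ↥W with hD
  set N := D + n with hN
  have hkN : LinearMap.ker (f ^ N) = LinearMap.ker (f ^ D) :=
    Module.End.ker_pow_eq_ker_pow_finrank_of_le (by omega)
  have hk2N : LinearMap.ker (f ^ (N + N)) = LinearMap.ker (f ^ D) :=
    Module.End.ker_pow_eq_ker_pow_finrank_of_le (by omega)
  have hdisj : LinearMap.ker (f ^ N) ⊓ LinearMap.range (f ^ N) = ⊥ := by
    rw [eq_bot_iff]
    rintro v ⟨hv1, w, rfl⟩
    have hw : w ∈ LinearMap.ker (f ^ (N + N)) := by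
      rw [LinearMap.mem_ker, pow_add, Module.End.mul_apply]
      exact hv1
    rw [hk2N, ← hkN] at hw
    simpa using hw
  have hsup : LinearMap.ker (f ^ N) ⊔ LinearMap.range (f ^ N) = ⊤ := by
    apply Submodule.eq_top_of_finrank_eq
    have h1 := Submodule.finrank_sup_add_finrank_inf_eq
      (LinearMap.ker (f ^ N)) (LinearMap.range (f ^ N))
    have h2 := LinearMap.finrank_range_add_finrank_ker (f ^ N)
    rw [hdisj] at h1
    simp only [finrank_bot, add_zero] at h1
    omega
  set V := Submodule.map W.subtype (LinearMap.ker (f ^ N)) with hV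
  have hVW : V ≤ W := Submodule.map_subtype_le _ _
  have hker_of : ∀ (m : ℕ) (w : ↥W),
      ((A.bracket.flip (x : L)) ^ m) (w : L) = 0 ↔ w ∈ LinearMap.ker (f ^ m) := by
    intro m w
    rw [LinearMap.mem_ker]
    have hco : (((f ^ m) w : ↥W) : L) = ((A.bracket.flip (x : L)) ^ m) (w : L) :=
      A.rmul_pow_coe hW x m w
    constructor
    · intro h
      apply Subtype.ext
      rw [hco, h]
      rfl
    · intro h
      rw [← hco, h]
      rfl
  have hproper : V ≠ W := by
    intro hEq
    apply hx
    refine ⟨N, ?_⟩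
    apply LinearMap.ker_eq_top.1
    rw [eq_top_iff]
    rintro w -
    have hwW : (w : L) ∈ V := by rw [hEq]; exact w.2
    obtain ⟨w', hw', hww'⟩ := Submodule.mem_map.1 hwW
    have : w' = w := Subtype.ext hww'
    rwa [this] at hw'
  have hsubV : A.IsSubalgebra V := by
    show A.prod V V ≤ V
    rw [A.prod_le_iff]
    intro m hm u hu
    obtain ⟨a, ha, rfl⟩ := Submodule.mem_map.1 hm
    obtain ⟨b, hb, rfl⟩ := Submodule.mem_map.1 hu
    have hmemW : A.bracket (a : L) (b : L) ∈ W := hW (A.bracket_mem_prod a.2 b.2)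
    refine Submodule.mem_map.2 ⟨⟨A.bracket (a : L) (b : L), hmemW⟩, ?_, rfl⟩
    have hza : ((A.bracket.flip (x : L)) ^ N) (a : L) = 0 := (hker_of N a).2 ha
    have hzb : ((A.bracket.flip (x : L)) ^ N) (b : L) = 0 := (hker_of N b).2 hb
    have hzero : ((A.bracket.flip (x : L)) ^ (N + N)) (A.bracket (a : L) (b : L)) = 0 := by
      have hle : Submodule.span F {z : L | ∃ i j, i + j = N + N ∧
          z = A.bracket (((A.bracket.flip (x : L)) ^ i) (a : L))
            (((A.bracket.flip (x : L)) ^ j) (b : L))} ≤ ⊥ := by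
        apply Submodule.span_le.2
        rintro z ⟨i, j, hij, rfl⟩
        simp only [SetLike.mem_coe, Submodule.mem_bot]
        rcases le_or_gt N i with hi | hi
        · have hia : ((A.bracket.flip (x : L)) ^ i) (a : L) = 0 := by
            rw [show i = (i - N) + N by omega, pow_add, Module.End.mul_apply, hza, map_zero]
          rw [hia, map_zero, LinearMap.zero_apply]
        · have hj : N ≤ j := by omega
          have hjb : ((A.bracket.flip (x : L)) ^ j) (b : L) = 0 := by
            rw [show j = (j - N) + N by omega, pow_add, Module.End.mul_apply, hzb, map_zero]
          rw [hjb, map_zero]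
      have := hle (A.pow_bracket_mem_span (x : L) (a : L) (b : L) (N + N))
      simpa using this
    have hmem2 : (⟨A.bracket (a : L) (b : L), hmemW⟩ : ↥W) ∈ LinearMap.ker (f ^ (N + N)) :=
      (hker_of (N + N) _).1 hzero
    rw [hk2N, ← hkN] at hmem2
    exact hmem2
  refine ⟨V, lt_of_le_of_ne hVW hproper, hsubV, ?_⟩
  have hWdec : W = V ⊔ Submodule.map W.subtype (LinearMap.range (f ^ N)) := by
    rw [hV, ← Submodule.map_sup, hsup, Submodule.map_subtype_top]
  have hrange : Submodule.map W.subtype (LinearMap.range (f ^ N)) ≤ A.nilpotentResidual W := by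
    rintro z hz
    obtain ⟨w, hw, rfl⟩ := Submodule.mem_map.1 hz
    obtain ⟨v, rfl⟩ := hw
    rw [← hn N (by omega)]
    have h1 := A.pow_flip_mem_lcs x.2 N (v : L) v.2
    have hco : (((f ^ N) v : ↥W) : L) = ((A.bracket.flip (x : L)) ^ N) (v : L) :=
      A.rmul_pow_coe hW x N v
    rw [← hco] at h1
    exact h1
  calc W = V ⊔ Submodule.map W.subtype (LinearMap.range (f ^ N)) := hWdec
  _ ≤ V ⊔ A.nilpotentResidual W := sup_le_sup le_rfl hrange

end Fitting


section Main

variable [FiniteDimensional F L]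

lemma exists_nilpotent_supplement (A : LeibnizAlg F L) :
    ∀ (d : ℕ) (W : Submodule F L), Module.finrank F ↥W ≤ d → A.IsSubalgebra W →
      ∃ C : Submodule F L, C ≤ W ∧ A.IsSubalgebra C ∧ A.IsNilpotentSub C ∧
        C ⊔ A.nilpotentResidual W = W := by
  intro d
  induction d with
  | zero =>
    intro W hr hW
    have hbot : W = ⊥ := by
      have : Module.finrank F ↥W = 0 := Nat.le_zero.1 hr
      exact Submodule.finrank_eq_zero.1 this
    refine ⟨W, le_rfl, hW, ⟨0, hbot⟩, ?_⟩
    rw [sup_eq_left]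
    exact A.nilpotentResidual_le_self W
  | succ d ih =>
    intro W hr hW
    by_cases hnilp : ∀ x : ↥W, IsNilpotent (A.rmul hW x)
    · refine ⟨W, le_rfl, hW, A.isNilpotentSub_of_forall_rmul hW hnilp, ?_⟩
      rw [sup_eq_left]
      exact A.nilpotentResidual_le_self W
    · push_neg at hnilp
      obtain ⟨x, hx⟩ := hnilp
      obtain ⟨V, hVlt, hVsub, hsupp⟩ := A.exists_proper_supplement hW hx
      have hr' : Module.finrank F ↥V ≤ d := by
        have := Submodule.finrank_lt_finrank_of_lt hVlt
        omega
      obtain ⟨C, hCV, hCsub, hCnil, hCsup⟩ := ih V hr' hVsub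
      refine ⟨C, hCV.trans hVlt.le, hCsub, hCnil, ?_⟩
      apply le_antisymm
      · exact sup_le (hCV.trans hVlt.le) (A.nilpotentResidual_le_self W)
      · have h1 : A.nilpotentResidual V ≤ A.nilpotentResidual W :=
          A.nilpotentResidual_mono hVlt.le
        have h2 : V ≤ C ⊔ A.nilpotentResidual W := by
          calc V = C ⊔ A.nilpotentResidual V := hCsup.symm
          _ ≤ C ⊔ A.nilpotentResidual W := sup_le_sup le_rfl h1
        calc W ≤ V ⊔ A.nilpotentResidual W := hsupp
        _ ≤ (C ⊔ A.nilpotentResidual W) ⊔ A.nilpotentResidual W := sup_le_sup h2 le_rfl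
        _ = C ⊔ A.nilpotentResidual W := by rw [sup_assoc, sup_idem]

/-- Key lemma: in an A-algebra, `[W, W] ≤ γ∞(W)` for any subalgebra `W`. -/
lemma prod_self_le_residual (A : LeibnizAlg F L) (hA : A.IsAAlgebra) {W : Submodule F L}
    (hW : A.IsSubalgebra W) : A.prod W W ≤ A.nilpotentResidual W := by
  obtain ⟨C, hCW, hCsub, hCnil, hCsup⟩ :=
    A.exists_nilpotent_supplement (Module.finrank F ↥W) W le_rfl hW
  have hab : A.prod C C = ⊥ := hA C hCsub hCnil
  set K := A.nilpotentResidual W with hK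
  have hKW : K ≤ W := A.nilpotentResidual_le_self W
  have h1 : A.prod W K ≤ K := A.prod_right_residual_le hW
  have h2 : A.prod K W ≤ K := A.prod_left_residual_le hW
  rw [A.prod_le_iff]
  intro m hm u hu
  rw [← hCsup] at hm hu
  obtain ⟨a, ha, b, hb, rfl⟩ := Submodule.mem_sup.1 hm
  obtain ⟨c, hc, e, he, rfl⟩ := Submodule.mem_sup.1 hu
  have hexp : A.bracket (a + b) (c + e) =
      A.bracket a c + A.bracket a e + A.bracket b c + A.bracket b e := by
    rw [map_add, map_add, LinearMap.add_apply, LinearMap.add_apply]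
    abel
  rw [hexp]
  have hac : A.bracket a c ∈ K := by
    have : A.bracket a c ∈ A.prod C C := A.bracket_mem_prod ha hc
    rw [hab] at this
    rw [Submodule.mem_bot] at this
    rw [this]
    exact K.zero_mem
  have hae : A.bracket a e ∈ K := h1 (A.bracket_mem_prod (hCW ha) he)
  have hbc : A.bracket b c ∈ K := h2 (A.bracket_mem_prod hb (hCW hc))
  have hbe : A.bracket b e ∈ K := h2 (A.bracket_mem_prod hb (hKW he))
  exact add_mem (add_mem (add_mem hac hae) hbc) hbe

lemma derSeries_succ_le (A : LeibnizAlg F L) : ∀ i, A.derSeries (i + 1) ≤ A.derSeries i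
  | 0 => le_top
  | i + 1 => A.prod_mono (A.derSeries_succ_le i) (A.derSeries_succ_le i)

lemma derSeries_isSubalgebra (A : LeibnizAlg F L) (i : ℕ) : A.IsSubalgebra (A.derSeries i) :=
  A.derSeries_succ_le i

end Main

end LeibnizAlg

/-- For a Leibniz A-algebra `L`, the lower nilpotent series coincides
with the derived series: `N_i(L) = L^(i)` for all `i ≥ 0`. -/
theorem lowerNilpotentSeries_eq_derSeries
    {F L : Type*} [Field F] [AddCommGroup L] [Module F L] [FiniteDimensional F L]
    (A : LeibnizAlg F L) (hA : A.IsAAlgebra) :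
    ∀ i : ℕ, A.lowerNilpotentSeries i = A.derSeries i := by
  intro i
  induction i with
  | zero => rfl
  | succ i ih =>
    show A.nilpotentResidual (A.lowerNilpotentSeries i) =
      A.prod (A.derSeries i) (A.derSeries i)
    rw [ih]
    apply le_antisymm
    · exact A.nilpotentResidual_le_lcs (A.derSeries i) 1
    · exact A.prod_self_le_residual hA (A.derSeries_isSubalgebra i)
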